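/- Let G : (0,∞) → ℝ be continuous, strictly decreasing, with G(R) ≥ −ν/3 for all R and lim_{R→0⁺} G(R) = g(σ̄)/3 where g(σ̄) ≤ 0 (so G < 0 on (0,∞)). Then for any R₀ > 0, the unique solution of R'(t) = R(t)G(R(t)), R(0) = R₀, exists for all t ≥ 0, satisfies R₀ e^{−νt/3} ≤ R(t) ≤ R₀, is strictly decreasing, and lim_{t→∞} R(t) = 0. -/

import Mathlib

open Set Filter Topology Real

open intervalIntegral in

private lemma stmt11_exist (G : ℝ → ℝ) (ν R₀ : ℝ) (hν : 0 < ν) (hR₀ : 0 < R₀)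
    (hc : ContinuousOn G (Set.Ioi 0))
    (hanti : StrictAntiOn G (Set.Ioi 0))
    (hlb : ∀ R ∈ Set.Ioi (0:ℝ), -ν / 3 ≤ G R)
    (hneg : ∀ R ∈ Set.Ioi (0:ℝ), G R < 0) :
    (∃ ρ : ℝ → ℝ, ρ 0 = R₀ ∧
      (∀ t ∈ Set.Ici (0:ℝ), 0 < ρ t) ∧
      (∀ t ∈ Set.Ici (0:ℝ), HasDerivAt ρ (ρ t * G (ρ t)) t) ∧
      (∀ t ∈ Set.Ici (0:ℝ), R₀ * Real.exp (-ν * t / 3) ≤ ρ t ∧ ρ t ≤ R₀) ∧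
      StrictAntiOn ρ (Set.Ici 0) ∧
      Filter.Tendsto ρ Filter.atTop (nhds 0)) := by
  classical
  set f : ℝ → ℝ := fun r => -(r * G r)⁻¹ with hf
  have hprod_neg : ∀ r ∈ Set.Ioi (0:ℝ), r * G r < 0 := fun r hr =>
    mul_neg_of_pos_of_neg hr (hneg r hr)
  have hfpos : ∀ r ∈ Set.Ioi (0:ℝ), 0 < f r := by
    intro r hr
    have := hprod_neg r hr
    have h0 : 0 < -(r * G r) := by linarith
    have : f r = (-(r * G r))⁻¹ := by rw [inv_neg]
    rw [this]
    positivity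
  have hfc : ContinuousOn f (Set.Ioi 0) := by
    apply ContinuousOn.neg
    apply ContinuousOn.inv₀ (continuousOn_id.mul hc)
    intro r hr; exact ne_of_lt (hprod_neg r hr)
  have huIcc : ∀ x y : ℝ, 0 < x → 0 < y → Set.uIcc x y ⊆ Set.Ioi 0 := by
    intro x y hx hy z hz
    exact lt_of_lt_of_le (lt_min hx hy) hz.1
  have hInt : ∀ x y : ℝ, 0 < x → 0 < y → IntervalIntegrable f MeasureTheory.volume x y := by
    intro x y hx hy
    exact (hfc.mono (huIcc x y hx hy)).intervalIntegrable
  set T : ℝ → ℝ := fun R => ∫ r in R..R₀, f r with hT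
  have hTderiv : ∀ R ∈ Set.Ioi (0:ℝ), HasDerivAt T (-f R) R := by
    intro R hR
    apply intervalIntegral.integral_hasDerivAt_left (hInt R R₀ hR hR₀)
    · exact ⟨Set.Ioi 0, Ioi_mem_nhds hR, hfc.aestronglyMeasurable measurableSet_Ioi⟩
    · exact hfc.continuousAt (Ioi_mem_nhds hR)
  have hTanti : StrictAntiOn T (Set.Ioi 0) := by
    apply strictAntiOn_of_deriv_neg (convex_Ioi 0)
    · intro x hx; exact ((hTderiv x hx).continuousAt).continuousWithinAt
    · intro x hx
      rw [interior_Ioi] at hx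
      rw [(hTderiv x hx).deriv]
      simpa using hfpos x hx
  have hT0 : T R₀ = 0 := intervalIntegral.integral_same
  -- logarithmic lower bound on T
  have hTlog : ∀ R : ℝ, 0 < R → R ≤ R₀ → 3 / ν * (Real.log R₀ - Real.log R) ≤ T R := by
    intro R hR hRle
    have hsub : Set.Icc R R₀ ⊆ Set.Ioi 0 := fun z hz => lt_of_lt_of_le hR hz.1
    have hint2 : IntervalIntegrable (fun r => 3 / ν * r⁻¹) MeasureTheory.volume R R₀ := by
      apply ContinuousOn.intervalIntegrable
      apply ContinuousOn.mono _ (huIcc R R₀ hR hR₀)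
      exact (continuousOn_inv₀.mono (fun z hz => ne_of_gt hz)).const_smul (3 / ν)
    have hmono : ∀ r ∈ Set.Icc R R₀, 3 / ν * r⁻¹ ≤ f r := by
      intro r hr
      have hr0 : 0 < r := lt_of_lt_of_le hR hr.1
      have hGneg := hneg r (by exact hr0)
      have hGlb := hlb r (by exact hr0)
      have h1 : r * G r < 0 := hprod_neg r hr0
      have h2 : -(r * G r) ≤ r * (ν / 3) := by nlinarith
      have h3 : 0 < -(r * G r) := by linarith
      have : (r * (ν / 3))⁻¹ ≤ (-(r * G r))⁻¹ := by
        apply inv_anti₀ h3 h2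
      calc 3 / ν * r⁻¹ = (r * (ν / 3))⁻¹ := by
            rw [mul_inv]
            field_simp
        _ ≤ (-(r * G r))⁻¹ := this
        _ = f r := by rw [inv_neg]
    have := intervalIntegral.integral_mono_on hRle hint2 (hInt R R₀ hR hR₀) hmono
    calc 3 / ν * (Real.log R₀ - Real.log R)
        = 3 / ν * ∫ r in R..R₀, r⁻¹ := by
          rw [integral_inv_of_pos hR hR₀, Real.log_div (ne_of_gt hR₀) (ne_of_gt hR)]
      _ = ∫ r in R..R₀, 3 / ν * r⁻¹ := (intervalIntegral.integral_const_mul _ _).symm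
      _ ≤ T R := this
  -- c' = T (R₀ + 1) < 0
  set c : ℝ := T (R₀ + 1) with hcdef
  have hR₀1 : (0:ℝ) < R₀ + 1 := by linarith
  have hcneg : c < 0 := by
    rw [hcdef, ← hT0]
    exact hTanti (Set.mem_Ioi.mpr hR₀) (Set.mem_Ioi.mpr hR₀1) (by linarith)
  -- surjectivity of T onto [c, ∞)
  have hsurj : ∀ t : ℝ, c ≤ t → ∃ R : ℝ, (0 < R ∧ R ≤ R₀ + 1) ∧ T R = t := by
    intro t hct
    set R₁ : ℝ := R₀ * Real.exp (-(ν * max t 0 / 3) - 1) with hR₁def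
    have hR₁pos : 0 < R₁ := mul_pos hR₀ (Real.exp_pos _)
    have hR₁lt : R₁ < R₀ := by
      rw [hR₁def]
      have : Real.exp (-(ν * max t 0 / 3) - 1) < 1 := by
        apply Real.exp_lt_one_iff.mpr
        have : 0 ≤ ν * max t 0 / 3 := by positivity
        linarith
      nlinarith
    have hTR₁ : t < T R₁ := by
      have hlog : Real.log R₁ = Real.log R₀ + (-(ν * max t 0 / 3) - 1) := by
        rw [hR₁def, Real.log_mul (ne_of_gt hR₀) (ne_of_gt (Real.exp_pos _)), Real.log_exp]
      have := hTlog R₁ hR₁pos hR₁lt.le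
      rw [hlog] at this
      have h3ν : 0 < 3 / ν := by positivity
      have hmax : t ≤ max t 0 := le_max_left _ _
      have : 3 / ν * (ν * max t 0 / 3 + 1) ≤ T R₁ := by
        calc 3 / ν * (ν * max t 0 / 3 + 1)
            = 3 / ν * (Real.log R₀ - (Real.log R₀ + (-(ν * max t 0 / 3) - 1))) := by ring_nf
          _ ≤ T R₁ := this
      have heq : 3 / ν * (ν * max t 0 / 3 + 1) = max t 0 + 3 / ν := by
        field_simp
      rw [heq] at this
      have : max t 0 + 3 / ν ≤ T R₁ := this
      have h3ν' : 0 < 3 / ν := h3ν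
      linarith [le_max_left t 0]
    have hsub : Set.Icc R₁ (R₀ + 1) ⊆ Set.Ioi 0 := fun z hz => lt_of_lt_of_le hR₁pos hz.1
    have hTc : ContinuousOn T (Set.Icc R₁ (R₀ + 1)) := by
      intro x hx
      exact ((hTderiv x (hsub hx)).continuousAt).continuousWithinAt
    have hit : t ∈ Set.Icc (T (R₀ + 1)) (T R₁) := ⟨hct, hTR₁.le⟩
    obtain ⟨R, hRmem, hTReq⟩ := intermediate_value_Icc' (by linarith : R₁ ≤ R₀ + 1) hTc hit
    exact ⟨R, ⟨lt_of_lt_of_le hR₁pos hRmem.1, hRmem.2⟩, hTReq⟩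
  have hsurj' : ∀ t : ℝ, ∃ R : ℝ, 0 < R ∧ R ≤ R₀ + 1 ∧ (c ≤ t → T R = t) := by
    intro t
    by_cases h : c ≤ t
    · obtain ⟨R, ⟨h1, h2⟩, h3⟩ := hsurj t h
      exact ⟨R, h1, h2, fun _ => h3⟩
    · exact ⟨R₀, hR₀, by linarith, fun hh => absurd hh h⟩
  set ρ : ℝ → ℝ := fun t => (hsurj' t).choose with hρdef
  have hρpos : ∀ t, 0 < ρ t := fun t => (hsurj' t).choose_spec.1
  have hρle1 : ∀ t, ρ t ≤ R₀ + 1 := fun t => (hsurj' t).choose_spec.2.1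
  have hρT : ∀ t, c ≤ t → T (ρ t) = t := fun t ht => (hsurj' t).choose_spec.2.2 ht
  have hTinj : Set.InjOn T (Set.Ioi 0) := hTanti.injOn
  -- T x < T y → y < x for x, y > 0
  have hlt : ∀ x y : ℝ, 0 < x → 0 < y → T x < T y → y < x := by
    intro x y hx hy hT'
    rcases lt_trichotomy x y with h | h | h
    · exact absurd (hTanti (Set.mem_Ioi.mpr hx) (Set.mem_Ioi.mpr hy) h) (by linarith)
    · exact absurd h (by rintro rfl; exact lt_irrefl _ hT')
    · exact h
  have hle : ∀ x y : ℝ, 0 < x → 0 < y → T x ≤ T y → y ≤ x := by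
    intro x y hx hy hT'
    rcases eq_or_lt_of_le hT' with h | h
    · exact le_of_eq (hTinj (Set.mem_Ioi.mpr hy) (Set.mem_Ioi.mpr hx) h.symm)
    · exact (hlt x y hx hy h).le
  have hρ0 : ρ 0 = R₀ := by
    have h1 : T (ρ 0) = 0 := hρT 0 hcneg.le
    exact hTinj (Set.mem_Ioi.mpr (hρpos 0)) (Set.mem_Ioi.mpr hR₀) (h1.trans hT0.symm)
  -- ρ is strictly antitone on Ici c
  have hρanti : StrictAntiOn ρ (Set.Ici c) := by
    intro s hs t ht hst
    apply hlt
    · exact hρpos s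
    · exact hρpos t
    · rw [hρT s hs, hρT t ht]; exact hst
  -- ρ t < R₀+1 for t > c
  have hρlt1 : ∀ t, c < t → ρ t < R₀ + 1 := by
    intro t ht
    apply hlt _ _ hR₀1 (hρpos t)
    rw [hρT t ht.le]
    exact ht
  -- ρ is a right inverse on Ioo 0 (R₀+1)
  have hρTR : ∀ R : ℝ, 0 < R → R < R₀ + 1 → c < T R ∧ ρ (T R) = R := by
    intro R hR hRlt
    have h1 : c < T R := hTanti (Set.mem_Ioi.mpr hR) (Set.mem_Ioi.mpr hR₀1) hRlt
    refine ⟨h1, ?_⟩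
    exact hTinj (Set.mem_Ioi.mpr (hρpos _)) (Set.mem_Ioi.mpr hR) (hρT _ h1.le)
  -- continuity of ρ on Ioi c
  have hρcont : ∀ t, c < t → ContinuousAt ρ t := by
    intro t ht
    have hmono : MonotoneOn (fun s => -ρ s) (Set.Ioi c) := by
      intro s hs u hu hsu
      rcases eq_or_lt_of_le hsu with rfl | h
      · exact le_rfl
      · have := hρanti (Set.mem_Ici.mpr (le_of_lt hs)) (Set.mem_Ici.mpr (le_of_lt hu)) h
        simp only [neg_le_neg_iff]
        exact this.le
    have himg : (fun s => -ρ s) '' (Set.Ioi c) ∈ nhds (-ρ t) := by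
      have hsub2 : Set.Ioo (-(R₀+1)) 0 ⊆ (fun s => -ρ s) '' (Set.Ioi c) := by
        intro y hy
        have hy1 : 0 < -y := by linarith [hy.2]
        have hy2 : -y < R₀ + 1 := by linarith [hy.1]
        obtain ⟨h1, h2⟩ := hρTR (-y) hy1 hy2
        refine ⟨T (-y), h1, ?_⟩
        show -ρ (T (-y)) = y
        rw [h2]; ring
      apply Filter.mem_of_superset _ hsub2
      apply IsOpen.mem_nhds isOpen_Ioo
      constructor
      · simp only [neg_lt_neg_iff]; exact hρlt1 t ht
      · simp only [Left.neg_neg_iff]; exact hρpos t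
    have := continuousAt_of_monotoneOn_of_image_mem_nhds hmono (Ioi_mem_nhds ht) himg
    have h2 : ContinuousAt (fun s => -(-ρ s)) t := this.neg
    simpa using h2
  -- the ODE
  have hρode : ∀ t, c < t → HasDerivAt ρ (ρ t * G (ρ t)) t := by
    intro t ht
    have hρt := hρpos t
    have hfρ : -f (ρ t) ≠ 0 := by
      have := hfpos (ρ t) (Set.mem_Ioi.mpr hρt)
      simp only [ne_eq, neg_eq_zero]
      linarith
    have hev : ∀ᶠ y in nhds t, T (ρ y) = y := by
      filter_upwards [Ioi_mem_nhds ht] with y hy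
      exact hρT y (le_of_lt hy)
    have := HasDerivAt.of_local_left_inverse (hρcont t ht)
      (hTderiv (ρ t) (Set.mem_Ioi.mpr hρt)) hfρ hev
    have heq : (-f (ρ t))⁻¹ = ρ t * G (ρ t) := by
      have hne : ρ t * G (ρ t) ≠ 0 := ne_of_lt (hprod_neg (ρ t) (Set.mem_Ioi.mpr hρt))
      simp only [hf, neg_neg]
      exact inv_inv _
    rwa [heq] at this
  -- bounds
  have hbounds : ∀ t ∈ Set.Ici (0:ℝ), R₀ * Real.exp (-ν * t / 3) ≤ ρ t ∧ ρ t ≤ R₀ := by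
    intro t ht
    have ht' : c ≤ t := le_trans hcneg.le ht
    have hub : ρ t ≤ R₀ := by
      apply hle _ _ hR₀ (hρpos t)
      rw [hρT t ht', hT0]
      exact ht
    refine ⟨?_, hub⟩
    have hlog := hTlog (ρ t) (hρpos t) hub
    rw [hρT t ht'] at hlog
    -- 3/ν * (log R₀ - log ρt) ≤ t
    have hexp : Real.log (R₀ * Real.exp (-ν * t / 3)) ≤ Real.log (ρ t) := by
      rw [Real.log_mul (ne_of_gt hR₀) (ne_of_gt (Real.exp_pos _)), Real.log_exp]
      have h3ν : 0 < ν / 3 := by positivity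
      have : Real.log R₀ - Real.log (ρ t) ≤ ν * t / 3 := by
        have h2 := mul_le_mul_of_nonneg_left hlog hν.le
        have h3 : ν * (3 / ν * (Real.log R₀ - Real.log (ρ t)))
            = 3 * (Real.log R₀ - Real.log (ρ t)) := by
          field_simp
        rw [h3] at h2
        linarith
      linarith
    have := Real.exp_le_exp.mpr hexp
    rwa [Real.exp_log (by positivity), Real.exp_log (hρpos t)] at this
  -- tendsto 0
  have htend : Filter.Tendsto ρ Filter.atTop (nhds 0) := by
    rw [tendsto_order]
    constructor
    · intro b hb
      filter_upwards with t
      exact lt_trans hb (hρpos t)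
    · intro b hb
      have hb2 : 0 < min (b/2) R₀ := lt_min (by linarith) hR₀
      filter_upwards [Filter.eventually_ge_atTop (max 0 (T (min (b/2) R₀)))] with t htt
      have ht0 : (0:ℝ) ≤ t := le_trans (le_max_left _ _) htt
      have ht' : c ≤ t := le_trans hcneg.le ht0
      have : ρ t ≤ min (b/2) R₀ := by
        apply hle _ _ hb2 (hρpos t)
        rw [hρT t ht']
        exact le_trans (le_max_right _ _) htt
      have := le_trans this (min_le_left _ _)
      linarith
  exact ⟨ρ, hρ0, fun t _ => hρpos t, fun t ht => hρode t (lt_of_lt_of_le hcneg ht),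
    hbounds, hρanti.mono (fun x hx => le_trans hcneg.le hx), htend⟩


private lemma stmt11_vf_anti (G : ℝ → ℝ) (hanti : StrictAntiOn G (Set.Ioi 0))
    (hneg : ∀ R ∈ Set.Ioi (0:ℝ), G R < 0) :
    ∀ x y : ℝ, 0 < x → 0 < y → x ≤ y → y * G y ≤ x * G x := by
  intro x y hx hy hxy
  rcases eq_or_lt_of_le hxy with rfl | h
  · exact le_rfl
  · have hGy : G y < G x := hanti hx hy h
    have h1 : y * G y ≤ y * G x := by nlinarith
    have h2 : y * G x ≤ x * G x := by
      have := hneg x hx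
      nlinarith
    linarith

private lemma stmt11_uniq (G : ℝ → ℝ) (hanti : StrictAntiOn G (Set.Ioi 0))
    (hneg : ∀ R ∈ Set.Ioi (0:ℝ), G R < 0) :
    (∀ ρ₁ ρ₂ : ℝ → ℝ, ∀ R₀ : ℝ,
      ρ₁ 0 = R₀ → ρ₂ 0 = R₀ →
      (∀ t ∈ Set.Ici (0:ℝ), 0 < ρ₁ t) → (∀ t ∈ Set.Ici (0:ℝ), 0 < ρ₂ t) →
      (∀ t ∈ Set.Ici (0:ℝ), HasDerivAt ρ₁ (ρ₁ t * G (ρ₁ t)) t) →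
      (∀ t ∈ Set.Ici (0:ℝ), HasDerivAt ρ₂ (ρ₂ t * G (ρ₂ t)) t) →
      ∀ t ∈ Set.Ici (0:ℝ), ρ₁ t = ρ₂ t) := by
  intro ρ₁ ρ₂ R₀ h10 h20 h1pos h2pos h1d h2d t ht
  set w : ℝ → ℝ := fun s => (ρ₁ s - ρ₂ s) ^ 2 with hw
  have hwd : ∀ s ∈ Set.Ici (0:ℝ), HasDerivAt w
      (2 * (ρ₁ s - ρ₂ s) * (ρ₁ s * G (ρ₁ s) - ρ₂ s * G (ρ₂ s))) s := by
    intro s hs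
    have := ((h1d s hs).sub (h2d s hs)).pow 2
    simpa [hw, Pi.pow_def, Pi.sub_def, mul_comm, mul_left_comm, mul_assoc] using this
  have hderiv_nonpos : ∀ s ∈ Set.Ioi (0:ℝ), deriv w s ≤ 0 := by
    intro s hs
    have hs' : s ∈ Set.Ici (0:ℝ) := Set.mem_Ici.mpr (le_of_lt hs)
    rw [(hwd s hs').deriv]
    have h1 := h1pos s hs'
    have h2 := h2pos s hs'
    rcases le_total (ρ₁ s) (ρ₂ s) with hle | hle
    · have := stmt11_vf_anti G hanti hneg (ρ₁ s) (ρ₂ s) h1 h2 hle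
      nlinarith
    · have := stmt11_vf_anti G hanti hneg (ρ₂ s) (ρ₁ s) h2 h1 hle
      nlinarith
  have hanti' : AntitoneOn w (Set.Ici 0) := by
    apply antitoneOn_of_deriv_nonpos (convex_Ici 0)
    · intro s hs
      exact ((hwd s hs).continuousAt).continuousWithinAt
    · intro s hs
      rw [interior_Ici] at hs
      exact ((hwd s (Set.mem_Ici.mpr (le_of_lt hs))).differentiableAt).differentiableWithinAt
    · intro s hs
      rw [interior_Ici] at hs
      exact hderiv_nonpos s hs
  have hw0 : w 0 = 0 := by simp [hw, h10, h20]
  have hwt : w t ≤ 0 := hw0 ▸ hanti' (le_refl (0:ℝ)) ht ht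
  have hwt' : (0:ℝ) ≤ w t := sq_nonneg _
  have : (ρ₁ t - ρ₂ t) ^ 2 = 0 := le_antisymm hwt hwt'
  have := pow_eq_zero_iff (n := 2) (by norm_num) |>.mp this
  linarith

/-- when g(σ̄) ≤ 0 (here a ≤ 0) all tumors shrink to zero. -/
theorem stmt11
    (G : ℝ → ℝ) (a ν R₀ : ℝ) (hν : 0 < ν) (hR₀ : 0 < R₀) (ha : a ≤ 0)
    (hc : ContinuousOn G (Set.Ioi 0))
    (hanti : StrictAntiOn G (Set.Ioi 0))
    (hlb : ∀ R ∈ Set.Ioi (0:ℝ), -ν / 3 ≤ G R)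
    (h0 : Filter.Tendsto G (nhdsWithin 0 (Set.Ioi 0)) (nhds (a / 3)))
    (hneg : ∀ R ∈ Set.Ioi (0:ℝ), G R < 0) :
    (∃ ρ : ℝ → ℝ, ρ 0 = R₀ ∧
      (∀ t ∈ Set.Ici (0:ℝ), 0 < ρ t) ∧
      (∀ t ∈ Set.Ici (0:ℝ), HasDerivAt ρ (ρ t * G (ρ t)) t) ∧
      (∀ t ∈ Set.Ici (0:ℝ), R₀ * Real.exp (-ν * t / 3) ≤ ρ t ∧ ρ t ≤ R₀) ∧
      StrictAntiOn ρ (Set.Ici 0) ∧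
      Filter.Tendsto ρ Filter.atTop (nhds 0)) ∧
    (∀ ρ₁ ρ₂ : ℝ → ℝ,
      ρ₁ 0 = R₀ → ρ₂ 0 = R₀ →
      (∀ t ∈ Set.Ici (0:ℝ), 0 < ρ₁ t) → (∀ t ∈ Set.Ici (0:ℝ), 0 < ρ₂ t) →
      (∀ t ∈ Set.Ici (0:ℝ), HasDerivAt ρ₁ (ρ₁ t * G (ρ₁ t)) t) →
      (∀ t ∈ Set.Ici (0:ℝ), HasDerivAt ρ₂ (ρ₂ t * G (ρ₂ t)) t) →
      ∀ t ∈ Set.Ici (0:ℝ), ρ₁ t = ρ₂ t) := by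
  refine ⟨stmt11_exist G ν R₀ hν hR₀ hc hanti hlb hneg, ?_⟩
  intro ρ₁ ρ₂ h10 h20 h1p h2p h1d h2d t ht
  exact stmt11_uniq G hanti hneg ρ₁ ρ₂ R₀ h10 h20 h1p h2p h1d h2d t ht
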